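/- Let (g₁, g₂) be jointly Gaussian standard normals with E[g₁ g₂] = ρ, and let t ∈ ℝ. Then P(g₁ ≤ t, g₂ > t) + P(g₁ > t, g₂ ≤ t) ≤ C √(1 − ρ) for an absolute constant C (uniformly in t). -/

import Mathlib

open MeasureTheory

/-- density of a bivariate standard Gaussian with correlation ρ -/
noncomputable def gauss2Density (ρ : ℝ) (z : ℝ × ℝ) : ℝ :=
  (1 / (2 * Real.pi * Real.sqrt (1 - ρ ^ 2))) *
    Real.exp (-(z.1 ^ 2 - 2 * ρ * z.1 * z.2 + z.2 ^ 2) / (2 * (1 - ρ ^ 2)))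

/-- density of a standard Gaussian on ℝ -/
noncomputable def gauss1Density (x : ℝ) : ℝ :=
  (1 / Real.sqrt (2 * Real.pi)) * Real.exp (-x ^ 2 / 2)

section Helpers
open Real

lemma gauss_lint (b m : ℝ) (hb : 0 < b) :
    ∫⁻ x : ℝ, ENNReal.ofReal (Real.exp (-(b * (x - m) ^ 2))) = ENNReal.ofReal (Real.sqrt (π / b)) := by
  simp_rw [show ∀ x : ℝ, -(b * (x - m) ^ 2) = -b * (x - m) ^ 2 by intro x; ring]
  rw [← ofReal_integral_eq_lintegral_ofReal ((integrable_exp_neg_mul_sq hb).comp_sub_right m)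
    (Filter.Eventually.of_forall fun x => (Real.exp_pos _).le)]
  congr 1
  have := integral_sub_right_eq_self (μ := volume) (fun x : ℝ => Real.exp (-b * x ^ 2)) m
  simpa [Function.comp] using this.trans (integral_gaussian b)

lemma gauss2Density_cont (ρ : ℝ) : Continuous (gauss2Density ρ) := by
  unfold gauss2Density; fun_prop

lemma gauss2Density_nonneg (ρ : ℝ) (z : ℝ × ℝ) : 0 ≤ gauss2Density ρ z := by
  unfold gauss2Density; positivity

lemma gauss2_total (ρ : ℝ) (h1 : -1 < ρ) (h2 : ρ < 1) :
    ∫⁻ z : ℝ × ℝ, ENNReal.ofReal (gauss2Density ρ z) = 1 := by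
  set σ2 : ℝ := 1 - ρ ^ 2 with hσ2
  have hσ : 0 < σ2 := by nlinarith
  set K : ℝ := 1 / (2 * π * Real.sqrt σ2) with hKdef
  have hK : 0 ≤ K := by positivity
  have hσ2ne : σ2 ≠ 0 := ne_of_gt hσ
  have hd : ∀ z : ℝ × ℝ, gauss2Density ρ z =
      K * (Real.exp (-((1:ℝ)/2 * (z.1 - 0) ^ 2)) *
        Real.exp (-((1/(2*σ2)) * (z.2 - ρ * z.1) ^ 2))) := by
    intro z
    unfold gauss2Density
    rw [← Real.exp_add]
    congr 1
    congr 1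
    rw [hσ2]
    field_simp [show (1:ℝ) - ρ ^ 2 ≠ 0 from ne_of_gt (by nlinarith)]
    ring
  have hmeas : Measurable fun y : ℝ => ENNReal.ofReal (Real.exp (-((1/(2*σ2)) * (y - ρ * 0) ^ 2))) := by fun_prop
  rw [MeasureTheory.Measure.volume_eq_prod, lintegral_prod _ (by
    exact ((ENNReal.measurable_ofReal.comp (gauss2Density_cont ρ).measurable)).aemeasurable)]
  have inner : ∀ x : ℝ, (∫⁻ y : ℝ, ENNReal.ofReal (gauss2Density ρ (x, y)))
      = (ENNReal.ofReal K * ENNReal.ofReal (Real.exp (-((1:ℝ)/2 * (x - 0) ^ 2)))) *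
        ENNReal.ofReal (Real.sqrt (π / (1/(2*σ2)))) := by
    intro x
    simp_rw [hd, ENNReal.ofReal_mul hK, ENNReal.ofReal_mul (Real.exp_nonneg _), ← mul_assoc]
    rw [lintegral_const_mul _ (by fun_prop)]
    rw [gauss_lint (1/(2*σ2)) (ρ * x) (by positivity)]
  simp_rw [inner]
  rw [lintegral_mul_const _ (by fun_prop), lintegral_const_mul _ (by fun_prop),
    gauss_lint (1/2) 0 (by norm_num)]
  rw [← ENNReal.ofReal_mul (by positivity), ← ENNReal.ofReal_mul (by positivity)]
  have harith : K * Real.sqrt (π / (1/2)) * Real.sqrt (π / (1/(2*σ2))) = 1 := by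
    rw [mul_assoc, ← Real.sqrt_mul (by positivity)]
    rw [show π / (1/2) * (π / (1/(2*σ2))) = (2*π)^2 * σ2 by field_simp]
    rw [Real.sqrt_mul (by positivity), Real.sqrt_sq (by positivity), hKdef]
    have hsσ : Real.sqrt σ2 ≠ 0 := by positivity
    field_simp
  rw [harith, ENNReal.ofReal_one]

lemma piece_le_one (ρ : ℝ) (h1 : -1 < ρ) (h2 : ρ < 1) (P : ℝ × ℝ → Prop) [DecidablePred P]
    (hPm : MeasurableSet {z | P z}) :
    (∫ z : ℝ × ℝ, if P z then gauss2Density ρ z else 0) ≤ 1 := by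
  have hf : Measurable fun z : ℝ × ℝ => if P z then gauss2Density ρ z else 0 :=
    Measurable.ite hPm (gauss2Density_cont ρ).measurable measurable_const
  rw [integral_eq_lintegral_of_nonneg_ae (Filter.Eventually.of_forall fun z => by
      by_cases h : P z <;> simp [h, gauss2Density_nonneg]) hf.aestronglyMeasurable]
  refine ENNReal.toReal_le_of_le_ofReal zero_le_one ?_
  rw [ENNReal.ofReal_one, ← gauss2_total ρ h1 h2]
  refine lintegral_mono fun z => ENNReal.ofReal_le_ofReal ?_
  by_cases h : P z <;> simp [h, gauss2Density_nonneg]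

lemma piece_le (ρ t : ℝ) (h0 : 0 ≤ ρ) (h2 : ρ < 1) (P : ℝ × ℝ → Prop) [DecidablePred P]
    (hPm : MeasurableSet {z | P z})
    (hP : ∀ z : ℝ × ℝ, P z → (z.1 - t) ^ 2 + (z.2 - t) ^ 2 ≤ (z.2 - z.1) ^ 2) :
    (∫ z : ℝ × ℝ, if P z then gauss2Density ρ z else 0) ≤ 2 * Real.sqrt (1 - ρ) := by
  have h1 : (-1:ℝ) < ρ := by linarith
  set σ2 : ℝ := 1 - ρ ^ 2 with hσ2
  have hσ : 0 < σ2 := by nlinarith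
  set K : ℝ := 1 / (2 * π * Real.sqrt σ2) with hKdef
  have hK : 0 ≤ K := by positivity
  set c : ℝ := 4 * (1 - ρ) with hcdef
  have hc : 0 < c := by simp only [hcdef]; linarith
  have hf : Measurable fun z : ℝ × ℝ => if P z then gauss2Density ρ z else 0 :=
    Measurable.ite hPm (gauss2Density_cont ρ).measurable measurable_const
  rw [integral_eq_lintegral_of_nonneg_ae (Filter.Eventually.of_forall fun z => by
      by_cases h : P z <;> simp [h, gauss2Density_nonneg]) hf.aestronglyMeasurable]
  refine ENNReal.toReal_le_of_le_ofReal (by positivity) ?_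
  -- pointwise bound
  have hpt : ∀ z : ℝ × ℝ, (if P z then gauss2Density ρ z else 0) ≤
      K * (Real.exp (-((1/c) * (z.1 - t) ^ 2)) * Real.exp (-((1/c) * (z.2 - t) ^ 2))) := by
    intro z
    by_cases h : P z
    · simp only [h, if_true]
      unfold gauss2Density
      rw [← Real.exp_add]
      refine mul_le_mul_of_nonneg_left (Real.exp_le_exp.2 ?_) hK
      have hm : (1:ℝ) - ρ ≠ 0 := by linarith
      have hp : (1:ℝ) + ρ ≠ 0 := by linarith
      have key : -(z.1 ^ 2 - 2 * ρ * z.1 * z.2 + z.2 ^ 2) / (2 * (1 - ρ ^ 2))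
          = -((z.2 - z.1) ^ 2 / (4 * (1 - ρ)) + (z.1 + z.2) ^ 2 / (4 * (1 + ρ))) := by
        have : (1:ℝ) - ρ ^ 2 = (1 - ρ) * (1 + ρ) := by ring
        rw [this]
        field_simp
        ring
      rw [key]
      have hs := hP z h
      have h1 : (z.1 - t) ^ 2 / c + (z.2 - t) ^ 2 / c ≤ (z.2 - z.1) ^ 2 / c := by
        rw [← add_div]
        gcongr
      have h2 : (0:ℝ) ≤ (z.1 + z.2) ^ 2 / (4 * (1 + ρ)) := by positivity
      have : -((1/c) * (z.1 - t) ^ 2) + -((1/c) * (z.2 - t) ^ 2)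
          = -((z.1 - t) ^ 2 / c + (z.2 - t) ^ 2 / c) := by ring
      rw [this, hcdef] at *
      simp only [neg_le_neg_iff]
      linarith [h1]
    · simp only [h, if_false]
      positivity
  calc ∫⁻ z : ℝ × ℝ, ENNReal.ofReal (if P z then gauss2Density ρ z else 0)
      ≤ ∫⁻ z : ℝ × ℝ, ENNReal.ofReal (K * (Real.exp (-((1/c) * (z.1 - t) ^ 2)) *
          Real.exp (-((1/c) * (z.2 - t) ^ 2)))) :=
        lintegral_mono fun z => ENNReal.ofReal_le_ofReal (hpt z)
    _ = ENNReal.ofReal K * (ENNReal.ofReal (Real.sqrt (π / (1/c))) *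
          ENNReal.ofReal (Real.sqrt (π / (1/c)))) := by
        simp_rw [ENNReal.ofReal_mul hK, ENNReal.ofReal_mul (Real.exp_nonneg _)]
        have hmf : AEMeasurable (fun x : ℝ => ENNReal.ofReal (Real.exp (-((1/c) * (x - t) ^ 2)))) volume := by
          fun_prop
        rw [MeasureTheory.Measure.volume_eq_prod, lintegral_const_mul _ (by fun_prop),
          lintegral_prod_mul hmf hmf]
        rw [gauss_lint (1/c) t (by positivity)]
    _ ≤ ENNReal.ofReal (2 * Real.sqrt (1 - ρ)) := by
        rw [← ENNReal.ofReal_mul (by positivity), ← ENNReal.ofReal_mul hK]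
        refine ENNReal.ofReal_le_ofReal ?_
        have hval : K * (Real.sqrt (π / (1/c)) * Real.sqrt (π / (1/c))) = 2 * (1 - ρ) / Real.sqrt σ2 := by
          rw [Real.mul_self_sqrt (by positivity), hKdef, hcdef]
          have hsσ : Real.sqrt σ2 ≠ 0 := by positivity
          field_simp
          ring
        rw [hval]
        have hsplit : Real.sqrt σ2 = Real.sqrt (1 - ρ) * Real.sqrt (1 + ρ) := by
          rw [hσ2, show (1:ℝ) - ρ ^ 2 = (1 - ρ) * (1 + ρ) by ring,
            Real.sqrt_mul (by linarith)]
        have h1p : (1:ℝ) ≤ Real.sqrt (1 + ρ) := by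
          nlinarith [Real.sq_sqrt (show (0:ℝ) ≤ 1 + ρ by linarith), Real.sqrt_nonneg (1 + ρ)]
        have hss : Real.sqrt (1-ρ) * Real.sqrt (1-ρ) = 1 - ρ :=
          Real.mul_self_sqrt (by linarith)
        rw [div_le_iff₀ (Real.sqrt_pos.2 hσ)]
        rw [hsplit]
        nlinarith [Real.sqrt_nonneg (1-ρ), Real.sqrt_nonneg (1+ρ),
          mul_nonneg (show (0:ℝ) ≤ 1 - ρ by linarith) (show (0:ℝ) ≤ Real.sqrt (1+ρ) - 1 by linarith)]

end Helpers

/-- `P(g₁ ≤ t, g₂ > t) + P(g₁ > t, g₂ ≤ t) ≤ C √(1 − ρ)`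
uniformly in `t`, for an absolute constant `C`. -/
theorem sepProb_le : ∃ C : ℝ, 0 < C ∧ ∀ ρ t : ℝ, -1 ≤ ρ → ρ ≤ 1 →
    (∫ z : ℝ × ℝ, if z.1 ≤ t ∧ t < z.2 then gauss2Density ρ z else 0) +
      (∫ z : ℝ × ℝ, if t < z.1 ∧ z.2 ≤ t then gauss2Density ρ z else 0)
      ≤ C * Real.sqrt (1 - ρ) := by
  refine ⟨4, by norm_num, fun ρ t hm hp => ?_⟩
  rcases eq_or_lt_of_le hp with h1 | h1
  · -- ρ = 1
    subst h1
    have hz : ∀ z : ℝ × ℝ, gauss2Density 1 z = 0 := by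
      intro z; unfold gauss2Density; norm_num
    simp only [hz, ite_self, integral_zero]
    norm_num
  rcases eq_or_lt_of_le hm with h2 | h2
  · -- ρ = -1
    have hz : ∀ z : ℝ × ℝ, gauss2Density ρ z = 0 := by
      intro z; unfold gauss2Density
      rw [show ρ = -1 from h2.symm]; norm_num
    simp only [hz, ite_self, integral_zero]
    rw [show ρ = -1 from h2.symm]
    norm_num
  -- -1 < ρ < 1
  have hm1 : MeasurableSet {z : ℝ × ℝ | z.1 ≤ t ∧ t < z.2} := by
    rw [Set.setOf_and]
    exact (measurableSet_le measurable_fst measurable_const).inter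
      (measurableSet_lt measurable_const measurable_snd)
  have hm2 : MeasurableSet {z : ℝ × ℝ | t < z.1 ∧ z.2 ≤ t} := by
    rw [Set.setOf_and]
    exact (measurableSet_lt measurable_const measurable_fst).inter
      (measurableSet_le measurable_snd measurable_const)
  by_cases h0 : 0 ≤ ρ
  · have b1 := piece_le ρ t h0 h1 (fun z => z.1 ≤ t ∧ t < z.2) hm1 (fun z hz => by
      nlinarith [mul_nonneg (sub_nonneg.2 hz.1) (sub_nonneg.2 hz.2.le)])
    have b2 := piece_le ρ t h0 h1 (fun z => t < z.1 ∧ z.2 ≤ t) hm2 (fun z hz => by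
      nlinarith [mul_nonneg (sub_nonneg.2 hz.1.le) (sub_nonneg.2 hz.2)])
    linarith
  · push_neg at h0
    have b1 := piece_le_one ρ h2 h1 (fun z => z.1 ≤ t ∧ t < z.2) hm1
    have b2 := piece_le_one ρ h2 h1 (fun z => t < z.1 ∧ z.2 ≤ t) hm2
    have hs : (1:ℝ) ≤ Real.sqrt (1 - ρ) := by
      nlinarith [Real.sq_sqrt (show (0:ℝ) ≤ 1 - ρ by linarith), Real.sqrt_nonneg (1 - ρ)]
    linarith
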